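/- The cyclic code C = ⟨v(z+1) + v²⟩ of length 4 over R = Z₂[v]/(v³) is not a (1,1)-reversible complement code. -/

import Mathlib

open Polynomial

noncomputable section

/-- The finite chain ring `R = Z₂[v]/(v³) = Z₂ + vZ₂ + v²Z₂`, `v³ = 0`. -/
abbrev Rv : Type := Polynomial (ZMod 2) ⧸ Ideal.span {(X : Polynomial (ZMod 2)) ^ 3}

instance instCommSemiringRv : CommSemiring Rv := Ideal.Quotient.commSemiring _

/-- The element `v` of `Rv`. -/
def vv : Rv := Ideal.Quotient.mk _ X

/-- The ambient ring `R[z]/(z⁴ − 1)` of cyclic codes of length 4 over `Rv`. -/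
abbrev Q4 : Type := Polynomial Rv ⧸ Ideal.span {(X : Polynomial Rv) ^ 4 - 1}

/-- The element `z` of `Q4`. -/
def zz : Q4 := Ideal.Quotient.mk _ X

/-- The constant `r` viewed in `Q4`. -/
def cst (r : Rv) : Q4 := Ideal.Quotient.mk _ (C r)

/-- The element of `Q4` corresponding to the length-4 codeword `a`. -/
def word4 (a : Fin 4 → Rv) : Q4 := Ideal.Quotient.mk _ (∑ i : Fin 4, C (a i) * X ^ (i : ℕ))

/-- `I` is a `(1,1)`-reversible complement cyclic code: it contains the
`(1,1)`-reverse complement `∑ᵢ (1 + a_{3−i}) zⁱ` of each codeword `∑ᵢ aᵢ zⁱ`. -/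
def IsRC11 (I : Ideal Q4) : Prop :=
  ∀ a : Fin 4 → Rv, word4 a ∈ I → word4 (fun i => 1 + a (Fin.rev i)) ∈ I


/-- Reduction `Rv → ZMod 2` sending `v ↦ 0`. -/
def eps : Rv →+* ZMod 2 :=
  Ideal.Quotient.lift _ (Polynomial.evalRingHom 0) (by
    intro p hp
    rw [Ideal.mem_span_singleton] at hp
    obtain ⟨q, rfl⟩ := hp
    simp)

abbrev Q4' : Type := Polynomial (ZMod 2) ⧸ Ideal.span {(X : Polynomial (ZMod 2)) ^ 4 - 1}

/-- `Q4 → Q4'` induced by `eps`. -/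
def phi : Q4 →+* Q4' :=
  Ideal.Quotient.lift _ ((Ideal.Quotient.mk _).comp (Polynomial.mapRingHom eps)) (by
    intro p hp
    rw [Ideal.mem_span_singleton] at hp
    obtain ⟨q, rfl⟩ := hp
    simp only [RingHom.comp_apply, Polynomial.coe_mapRingHom, Polynomial.map_mul,
      Polynomial.map_sub, Polynomial.map_pow, Polynomial.map_X, Polynomial.map_one]
    rw [Ideal.Quotient.eq_zero_iff_mem]
    exact Ideal.mul_mem_right _ _ (Ideal.subset_span rfl))

lemma eps_vv : eps vv = 0 := by
  simp [eps, vv]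

lemma phi_word4 (a : Fin 4 → Rv) :
    phi (word4 a) = Ideal.Quotient.mk _ (∑ i : Fin 4, C (eps (a i)) * X ^ (i : ℕ)) := by
  simp [phi, word4, Polynomial.map_sum]

/-- The cyclic code `C = ⟨v(z+1) + v²⟩` of length 4 over `Z₂[v]/(v³)` is
not a `(1,1)`-reversible complement code. -/
theorem stmt14 : ¬ IsRC11 (Ideal.span {cst vv * (zz + 1) + cst (vv ^ 2)}) := by
  intro h
  have h0 : word4 (fun _ => 0) ∈ Ideal.span {cst vv * (zz + 1) + cst (vv ^ 2)} := by
    have : word4 (fun _ => (0 : Rv)) = 0 := by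
      simp [word4]
    rw [this]; exact zero_mem _
  have h1 := h _ h0
  have hmem : word4 (fun _ => (1 : Rv)) ∈ Ideal.span {cst vv * (zz + 1) + cst (vv ^ 2)} := by
    simpa using h1
  rw [Ideal.mem_span_singleton'] at hmem
  obtain ⟨c, hc⟩ := hmem
  have hg : phi (cst vv * (zz + 1) + cst (vv ^ 2)) = 0 := by
    simp [phi, cst, zz, map_add, map_mul, eps_vv, map_pow]
  have hz : phi (word4 fun _ => (1 : Rv)) = 0 := by
    rw [← hc, map_mul, hg, mul_zero]
  rw [phi_word4] at hz
  simp only [map_one] at hz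
  rw [Ideal.Quotient.eq_zero_iff_mem, Ideal.mem_span_singleton] at hz
  have hp : (∑ i : Fin 4, (1 : Polynomial (ZMod 2)) * X ^ (i : ℕ)) = 1 + X + X ^ 2 + X ^ 3 := by
    rw [Fin.sum_univ_four]
    norm_num [show ((0:Fin 4):ℕ) = 0 from rfl, show ((1:Fin 4):ℕ) = 1 from rfl,
      show ((2:Fin 4):ℕ) = 2 from rfl, show ((3:Fin 4):ℕ) = 3 from rfl]
  rw [hp] at hz
  have hne : (1 + X + X ^ 2 + X ^ 3 : Polynomial (ZMod 2)) ≠ 0 := fun hcon => by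
    have := congrArg (fun p => Polynomial.coeff p 0) hcon
    simp at this
  have hdeg := Polynomial.natDegree_le_of_dvd hz hne
  have h4 : ((X : Polynomial (ZMod 2)) ^ 4 - 1).natDegree = 4 := by
    compute_degree!
  have h3 : (1 + X + X ^ 2 + X ^ 3 : Polynomial (ZMod 2)).natDegree ≤ 3 := by
    compute_degree
  omega
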